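/- Let x_1 < x_2 < ⋯ < x_d and y_1 < y_2 < ⋯ < y_{d-1} be real numbers, all 2d−1 of them distinct, and for k = 1,…,d set μ_k = ∏_{i=1}^{k-1} (x_k−y_i)/(x_k−x_i) · ∏_{j=k+1}^{d} (x_k−y_{j-1})/(x_k−x_j). Then μ_k > 0 for all k = 1,…,d if and only if the sequences interlace, i.e. x_1 < y_1 < x_2 < ⋯ < x_{d-1} < y_{d-1} < x_d. -/

import Mathlib

/-- The transition weight
`μ_k = ∏_{i=1}^{k-1} (x_k−y_i)/(x_k−x_i) · ∏_{j=k+1}^{d} (x_k−y_{j-1})/(x_k−x_j)`. -/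
noncomputable def muWeight (d : ℕ) (x y : ℕ → ℝ) (k : ℕ) : ℝ :=
  (∏ i ∈ Finset.Icc 1 (k - 1), (x k - y i) / (x k - x i)) *
    ∏ j ∈ Finset.Icc (k + 1) d, (x k - y (j - 1)) / (x k - x j)

/-- If a product over a finset is positive, the number of negative factors is even;
if negative, it is odd. -/
lemma prod_sign_parity (s : Finset ℕ) (f : ℕ → ℝ) :
    (0 < ∏ i ∈ s, f i → Even ((s.filter fun i => f i < 0).card)) ∧
    ((∏ i ∈ s, f i) < 0 → Odd ((s.filter fun i => f i < 0).card)) := by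
  classical
  induction s using Finset.induction_on with
  | empty => simp
  | @insert a s ha ih =>
    rw [Finset.prod_insert ha, Finset.filter_insert]
    by_cases hfa : f a < 0
    · rw [if_pos hfa, Finset.card_insert_of_notMem
        (fun h => ha (Finset.mem_of_mem_filter a h))]
      constructor
      · intro hp
        rcases mul_pos_iff.mp hp with ⟨h1, _⟩ | ⟨_, h2⟩
        · linarith
        · exact (ih.2 h2).add_one
      · intro hp
        rcases mul_neg_iff.mp hp with ⟨h1, _⟩ | ⟨_, h2⟩
        · linarith
        · exact (ih.1 h2).add_one
    · rw [if_neg hfa]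
      push_neg at hfa
      constructor
      · intro hp
        rcases mul_pos_iff.mp hp with ⟨_, h2⟩ | ⟨h1, _⟩
        · exact ih.1 h2
        · linarith
      · intro hp
        rcases mul_neg_iff.mp hp with ⟨_, h2⟩ | ⟨h1, _⟩
        · exact ih.2 h2
        · linarith

/-- The sign of `muWeight` is the sign of the product of `(x k - y i)` for `i < k`
and `(y i - x k)` for `i ≥ k`. -/
lemma muWeight_pos_iff (d k : ℕ) (x y : ℕ → ℝ) (h1 : 1 ≤ k) (hkd : k ≤ d)
    (hx : ∀ i j, 1 ≤ i → i < j → j ≤ d → x i < x j) :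
    0 < muWeight d x y k ↔
      0 < (∏ i ∈ Finset.Ioc 0 (k - 1), (x k - y i)) *
          ∏ i ∈ Finset.Ioc (k - 1) (d - 1), (y i - x k) := by
  classical
  have e1 : Finset.Icc 1 (k - 1) = Finset.Ioc 0 (k - 1) := by
    ext a; simp only [Finset.mem_Icc, Finset.mem_Ioc]; omega
  have e2 : Finset.Icc (k + 1) d = (Finset.Ioc (k - 1) (d - 1)).image (· + 1) := by
    ext a; simp only [Finset.mem_Icc, Finset.mem_image, Finset.mem_Ioc]
    constructor
    · intro h; exact ⟨a - 1, by omega, by omega⟩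
    · rintro ⟨b, hb, rfl⟩; omega
  unfold muWeight
  rw [e1, e2, Finset.prod_image (by intro a _ b _ h; simp only at h; omega)]
  have step : ∀ i ∈ Finset.Ioc (k - 1) (d - 1),
      (x k - y (i + 1 - 1)) / (x k - x (i + 1)) = (y i - x k) / (x (i + 1) - x k) := by
    intro i hi
    rw [Nat.add_sub_cancel, ← neg_div_neg_eq, neg_sub, neg_sub]
  rw [Finset.prod_congr rfl step, Finset.prod_div_distrib, Finset.prod_div_distrib,
    div_mul_div_comm]
  have hD1 : 0 < ∏ i ∈ Finset.Ioc 0 (k - 1), (x k - x i) := by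
    apply Finset.prod_pos; intro i hi; rw [Finset.mem_Ioc] at hi
    have := hx i k hi.1 (by omega) hkd; linarith
  have hD2 : 0 < ∏ i ∈ Finset.Ioc (k - 1) (d - 1), (x (i + 1) - x k) := by
    apply Finset.prod_pos; intro i hi; rw [Finset.mem_Ioc] at hi
    have := hx k (i + 1) h1 (by omega) (by omega); linarith
  rw [lt_div_iff₀ (mul_pos hD1 hD2), zero_mul]

/-- For `x₁ < ⋯ < x_d` and `y₁ < ⋯ < y_{d−1}`, all `2d−1` numbers distinct, the transition
weights `μ_k` are all positive iff the sequences interlace: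
`x₁ < y₁ < x₂ < ⋯ < x_{d−1} < y_{d−1} < x_d`. -/
theorem mu_pos_iff_interlacing (d : ℕ) (hd : 1 ≤ d) (x y : ℕ → ℝ)
    (hx : ∀ i j, 1 ≤ i → i < j → j ≤ d → x i < x j)
    (hy : ∀ i j, 1 ≤ i → i < j → j ≤ d - 1 → y i < y j)
    (hxy : ∀ k ∈ Finset.Icc 1 d, ∀ i ∈ Finset.Icc 1 (d - 1), x k ≠ y i) :
    (∀ k ∈ Finset.Icc 1 d, 0 < muWeight d x y k) ↔
      (∀ m, 1 ≤ m → m ≤ d - 1 → x m < y m ∧ y m < x (m + 1)) := by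
  classical
  constructor
  · -- hard direction: positivity ⇒ interlacing
    intro hmu
    -- parity of the count of y's below x k
    have hpar : ∀ k, 1 ≤ k → k ≤ d →
        Even (((Finset.Ioc 0 (d - 1)).filter fun i => y i < x k).card + (k - 1)) := by
      intro k h1 h2
      have hk := hmu k (Finset.mem_Icc.mpr ⟨h1, h2⟩)
      rw [muWeight_pos_iff d k x y h1 h2 hx] at hk
      set g : ℕ → ℝ := fun i => if i < k then x k - y i else y i - x k with hg
      have hs : Finset.Ioc 0 (k - 1) ∪ Finset.Ioc (k - 1) (d - 1) = Finset.Ioc 0 (d - 1) :=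
        Finset.Ioc_union_Ioc_eq_Ioc (Nat.zero_le _) (by omega)
      have hdisj : Disjoint (Finset.Ioc 0 (k - 1)) (Finset.Ioc (k - 1) (d - 1)) := by
        rw [Finset.disjoint_left]
        intro a ha hb
        rw [Finset.mem_Ioc] at ha hb
        omega
      have hprod : 0 < ∏ i ∈ Finset.Ioc 0 (d - 1), g i := by
        rw [← hs, Finset.prod_union hdisj]
        have e1 : ∏ i ∈ Finset.Ioc 0 (k - 1), g i
            = ∏ i ∈ Finset.Ioc 0 (k - 1), (x k - y i) :=
          Finset.prod_congr rfl (fun i hi => by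
            rw [Finset.mem_Ioc] at hi
            exact if_pos (by omega))
        have e2 : ∏ i ∈ Finset.Ioc (k - 1) (d - 1), g i
            = ∏ i ∈ Finset.Ioc (k - 1) (d - 1), (y i - x k) :=
          Finset.prod_congr rfl (fun i hi => by
            rw [Finset.mem_Ioc] at hi
            exact if_neg (by omega))
        rw [e1, e2]; exact hk
      have heven := (prod_sign_parity (Finset.Ioc 0 (d - 1)) g).1 hprod
      -- split the negative-factor count
      have hsplit_neg : ((Finset.Ioc 0 (d - 1)).filter fun i => g i < 0).card
          = ((Finset.Ioc 0 (k - 1)).filter fun i => x k < y i).card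
            + ((Finset.Ioc (k - 1) (d - 1)).filter fun i => y i < x k).card := by
        rw [← hs, Finset.filter_union,
          Finset.card_union_of_disjoint (Finset.disjoint_filter_filter hdisj)]
        congr 1
        · apply congrArg Finset.card
          apply Finset.filter_congr
          intro i hi; rw [Finset.mem_Ioc] at hi
          have : g i = x k - y i := if_pos (by omega)
          rw [this, sub_neg]
        · apply congrArg Finset.card
          apply Finset.filter_congr
          intro i hi; rw [Finset.mem_Ioc] at hi
          have : g i = y i - x k := if_neg (by omega)
          rw [this, sub_neg]
      -- split the below-count
      have hsplit_c : ((Finset.Ioc 0 (d - 1)).filter fun i => y i < x k).card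
          = ((Finset.Ioc 0 (k - 1)).filter fun i => y i < x k).card
            + ((Finset.Ioc (k - 1) (d - 1)).filter fun i => y i < x k).card := by
        rw [← hs, Finset.filter_union,
          Finset.card_union_of_disjoint (Finset.disjoint_filter_filter hdisj)]
      -- on the first block, "above" is the complement of "below"
      have ht : ((Finset.Ioc 0 (k - 1)).filter fun i => y i < x k).card
          + ((Finset.Ioc 0 (k - 1)).filter fun i => x k < y i).card = k - 1 := by
        have hcompl : ((Finset.Ioc 0 (k - 1)).filter fun i => x k < y i)
            = ((Finset.Ioc 0 (k - 1)).filter fun i => ¬ (y i < x k)) := by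
          apply Finset.filter_congr
          intro i hi; rw [Finset.mem_Ioc] at hi
          have hne' : x k ≠ y i := hxy k (Finset.mem_Icc.mpr ⟨h1, h2⟩) i
            (Finset.mem_Icc.mpr ⟨hi.1, by omega⟩)
          constructor
          · intro hlt; exact not_lt.2 hlt.le
          · intro hnl; exact lt_of_le_of_ne (not_lt.1 hnl) hne'
        rw [hcompl]
        have := Finset.card_filter_add_card_filter_not
          (s := Finset.Ioc 0 (k - 1)) (p := fun i => y i < x k)
        rw [Nat.card_Ioc] at this
        omega
      obtain ⟨a, ha⟩ := heven
      rw [hsplit_neg] at ha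
      exact ⟨((Finset.Ioc 0 (k - 1)).filter fun i => y i < x k).card + a, by omega⟩
    -- monotonicity of the count
    have hmono : ∀ k l, 1 ≤ k → k ≤ l → l ≤ d →
        ((Finset.Ioc 0 (d - 1)).filter fun i => y i < x k).card
          ≤ ((Finset.Ioc 0 (d - 1)).filter fun i => y i < x l).card := by
      intro k l h1 hkl hld
      apply Finset.card_le_card
      intro i hi
      rw [Finset.mem_filter] at hi ⊢
      refine ⟨hi.1, ?_⟩
      rcases eq_or_lt_of_le hkl with he | hl
      · rw [← he]; exact hi.2
      · exact hi.2.trans (hx k l h1 hl hld)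
    -- strict step
    have hstep : ∀ k, 1 ≤ k → k + 1 ≤ d →
        ((Finset.Ioc 0 (d - 1)).filter fun i => y i < x k).card + 1
          ≤ ((Finset.Ioc 0 (d - 1)).filter fun i => y i < x (k + 1)).card := by
      intro k h1 h2
      have hle := hmono k (k + 1) h1 (Nat.le_succ k) h2
      by_contra hcon
      push_neg at hcon
      obtain ⟨a, ha⟩ := hpar k h1 (by omega)
      obtain ⟨b, hb⟩ := hpar (k + 1) (by omega) h2
      omega
    -- chain inequality
    have hchain : ∀ k, 1 ≤ k → ∀ l, k ≤ l → l ≤ d →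
        ((Finset.Ioc 0 (d - 1)).filter fun i => y i < x k).card + (l - k)
          ≤ ((Finset.Ioc 0 (d - 1)).filter fun i => y i < x l).card := by
      intro k h1 l
      induction l with
      | zero => intro h _; omega
      | succ n ih =>
        intro hkl hld
        rcases Nat.eq_or_lt_of_le hkl with heq | hlt
        · rw [← heq]; omega
        · have h2 := ih (by omega) (by omega)
          have h3 := hstep n (by omega) hld
          omega
    -- the count is ≤ d - 1
    have hcd : ((Finset.Ioc 0 (d - 1)).filter fun i => y i < x d).card ≤ d - 1 := by
      have := Finset.card_filter_le (Finset.Ioc 0 (d - 1)) (fun i => y i < x d)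
      rwa [Nat.card_Ioc] at this
    -- hence the count is exactly k - 1
    have hck : ∀ k, 1 ≤ k → k ≤ d →
        ((Finset.Ioc 0 (d - 1)).filter fun i => y i < x k).card = k - 1 := by
      intro k h1 h2
      have l1 := hchain 1 le_rfl k h1 h2
      have l2 := hchain k h1 d h2 le_rfl
      omega
    -- conclude interlacing
    intro m hm1 hm2
    have hcm := hck m hm1 (by omega)
    have hcm1 := hck (m + 1) (by omega) (by omega)
    constructor
    · rcases lt_trichotomy (x m) (y m) with h | h | h
      · exact h
      · exact absurd h (hxy m (Finset.mem_Icc.mpr ⟨hm1, by omega⟩) m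
          (Finset.mem_Icc.mpr ⟨hm1, hm2⟩))
      · exfalso
        have hsub : Finset.Ioc 0 m ⊆ (Finset.Ioc 0 (d - 1)).filter fun i => y i < x m := by
          intro i hi
          rw [Finset.mem_Ioc] at hi
          rw [Finset.mem_filter, Finset.mem_Ioc]
          refine ⟨⟨hi.1, by omega⟩, ?_⟩
          rcases eq_or_lt_of_le hi.2 with he | hl
          · rw [he]; exact h
          · exact (hy i m hi.1 hl hm2).trans h
        have hcard := Finset.card_le_card hsub
        rw [Nat.card_Ioc, hcm] at hcard
        omega
    · rcases lt_trichotomy (y m) (x (m + 1)) with h | h | h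
      · exact h
      · exact absurd h.symm (hxy (m + 1) (Finset.mem_Icc.mpr ⟨by omega, by omega⟩) m
          (Finset.mem_Icc.mpr ⟨hm1, hm2⟩))
      · exfalso
        have hsub : ((Finset.Ioc 0 (d - 1)).filter fun i => y i < x (m + 1))
            ⊆ Finset.Ioc 0 (m - 1) := by
          intro i hi
          rw [Finset.mem_filter, Finset.mem_Ioc] at hi
          rw [Finset.mem_Ioc]
          refine ⟨hi.1.1, ?_⟩
          by_contra hcon
          push_neg at hcon
          have hyy : y m ≤ y i := by
            rcases Nat.eq_or_lt_of_le (show m ≤ i by omega) with he | hl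
            · rw [he]
            · exact (hy m i hm1 hl hi.1.2).le
          linarith [hi.2]
        have hcard := Finset.card_le_card hsub
        rw [Nat.card_Ioc, hcm1] at hcard
        omega
  · -- easy direction: interlacing ⇒ positivity
    intro hint k hk
    rw [Finset.mem_Icc] at hk
    rw [muWeight_pos_iff d k x y hk.1 hk.2 hx]
    apply mul_pos
    · apply Finset.prod_pos
      intro i hi; rw [Finset.mem_Ioc] at hi
      obtain ⟨_, h2⟩ := hint i hi.1 (by omega)
      have hle : x (i + 1) ≤ x k := by
        rcases Nat.eq_or_lt_of_le (show i + 1 ≤ k by omega) with he | hl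
        · rw [he]
        · exact (hx (i + 1) k (by omega) hl hk.2).le
      linarith
    · apply Finset.prod_pos
      intro i hi; rw [Finset.mem_Ioc] at hi
      obtain ⟨h1, _⟩ := hint i (by omega) hi.2
      have hle : x k ≤ x i := by
        rcases Nat.eq_or_lt_of_le (show k ≤ i by omega) with he | hl
        · rw [he]
        · exact (hx k i hk.1 hl (by omega)).le
      linarith
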